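/- Let X ∈ ℝ^{n×p} and D ∈ ℝ^{m×p} be real matrices, let S ⊆ {1,…,m} with |S| = s, and let D_{S^c} denote the submatrix of D formed by the rows indexed by the complement of S. For ν > 0 define the block matrices A₁(ν) ∈ ℝ^{(n+m)×(p+s)} with top blocks [X, 0_{n×s}] and bottom blocks [−D/√ν, E_S/√ν], and A₂(ν) ∈ ℝ^{(n+m)×(m−s)} with top block 0_{n×(m−s)} and bottom block E_{S^c}/√ν, where E_S (resp. E_{S^c}) is the m×s (resp. m×(m−s)) matrix of those columns of the m×m identity matrix indexed by S (resp. S^c). Let P(ν) denote the map applying, to each column of A₂(ν), the orthogonal projection of ℝ^{n+m} onto the column space of A₁(ν), and let r(ν) = ‖P(ν)A₂(ν)‖_F / ‖A₂(ν)‖_F. Then lim_{ν → +∞} r(ν) = 0 (equivalently, the angle θ(ν) = arccos r(ν) tends to 90°) if and only if ker(X) ⊆ ker(D_{S^c}), where ker denotes the null space {x ∈ ℝ^p : Mx = 0}. -/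

import Mathlib

open scoped BigOperators
open Filter

set_option maxHeartbeats 1000000 in
/-- Theorem 1 of the paper (linear model): the normalized Frobenius norm
`r(ν) = ‖P_{A₁(ν)} A₂(ν)‖_F / ‖A₂(ν)‖_F` of the projection of the `γ_{Sᶜ}`-columns
onto the column space of the `(β, γ_S)`-columns tends to `0` as `ν → +∞`
(equivalently, the angle `θ(ν) = arccos r(ν)` tends to `90°`)
if and only if `ker(X) ⊆ ker(D_{Sᶜ})`. -/
theorem stmt_11 (n m p s : ℕ) (X : Matrix (Fin n) (Fin p) ℝ)
    (D : Matrix (Fin m) (Fin p) ℝ) (S : Finset (Fin m)) (hs : S.card = s) :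
    let E := EuclideanSpace ℝ (Fin n ⊕ Fin m)
    let toE : ((Fin n ⊕ Fin m) → ℝ) → E := (WithLp.equiv 2 ((Fin n ⊕ Fin m) → ℝ)).symm
    -- columns of A₁(ν), indexed by the variables (β, γ_S)
    let col₁ : ℝ → (Fin p ⊕ {k : Fin m // k ∈ S}) → E := fun ν j =>
      Sum.elim
        (fun jp => toE (Sum.elim (fun a => X a jp) (fun b => -D b jp / Real.sqrt ν)))
        (fun jk => toE (Sum.elim (fun _ => 0)
          (fun b => (if b = jk.1 then 1 else 0) / Real.sqrt ν))) j
    -- columns of A₂(ν), indexed by γ_{Sᶜ}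
    let col₂ : ℝ → {k : Fin m // k ∉ S} → E := fun ν k =>
      toE (Sum.elim (fun _ => 0) (fun b => (if b = k.1 then 1 else 0) / Real.sqrt ν))
    -- column space of A₁(ν)
    let K : ℝ → Submodule ℝ E := fun ν => Submodule.span ℝ (Set.range (col₁ ν))
    -- r(ν) = ‖P_{A₁(ν)} A₂(ν)‖_F / ‖A₂(ν)‖_F
    let r : ℝ → ℝ := fun ν =>
      Real.sqrt (∑ k : {k : Fin m // k ∉ S},
          ‖((Submodule.orthogonalProjectionOnto (K ν) (col₂ ν k) : K ν) : E)‖ ^ 2) /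
        Real.sqrt (∑ k : {k : Fin m // k ∉ S}, ‖col₂ ν k‖ ^ 2)
    Filter.Tendsto r Filter.atTop (nhds 0) ↔
      ∀ x : Fin p → ℝ, X.mulVec x = 0 → ∀ k : Fin m, k ∉ S → D.mulVec x k = 0 := by
  intro E toE col₁ col₂ K r
  classical
  set L := WithLp.linearEquiv 2 ℝ ((Fin n ⊕ Fin m) → ℝ) with hL
  set w : ℝ → (Fin p → ℝ) → ({k : Fin m // k ∈ S} → ℝ) → E := fun ν β γ =>
    toE (Sum.elim (fun a => X.mulVec β a)
      (fun b => ((if h : b ∈ S then γ ⟨b, h⟩ else 0) - D.mulVec β b) / Real.sqrt ν)) with hw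
  have hsum : ∀ (ν : ℝ) (β : Fin p → ℝ) (γ : {k : Fin m // k ∈ S} → ℝ),
      (∑ j : Fin p ⊕ {k : Fin m // k ∈ S}, Sum.elim β γ j • col₁ ν j) = w ν β γ := by
    intro ν β γ
    apply L.injective
    rw [map_sum]
    funext i
    rw [Finset.sum_apply]
    simp only [hw, hL, col₁, toE, map_smul, WithLp.coe_linearEquiv, WithLp.equiv_symm_apply, WithLp.ofLp_toLp, Equiv.apply_symm_apply,
      Pi.smul_apply, smul_eq_mul]
    rcases i with a | b
    · simp only [Fintype.sum_sum_type, Sum.elim_inl, Sum.elim_inr, Equiv.apply_symm_apply,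
        mul_zero, Finset.sum_const_zero,
        add_zero, Matrix.mulVec, dotProduct]
      exact Finset.sum_congr rfl fun jp _ => mul_comm _ _
    · simp only [Fintype.sum_sum_type, Sum.elim_inl, Sum.elim_inr, Equiv.apply_symm_apply]
      have h1 : ∑ x : Fin p, β x * (-D b x / Real.sqrt ν)
          = -(D.mulVec β b / Real.sqrt ν) := by
        have he : ∀ x : Fin p, β x * (-D b x / Real.sqrt ν)
            = (-(D b x * β x)) / Real.sqrt ν := fun x => by ring
        rw [Finset.sum_congr rfl fun x _ => he x, ← Finset.sum_div, Finset.sum_neg_distrib,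
          neg_div, Matrix.mulVec, dotProduct]
      have h2 : ∑ x : {k : Fin m // k ∈ S}, γ x * ((if b = ↑x then 1 else 0) / Real.sqrt ν)
          = (if h : b ∈ S then γ ⟨b, h⟩ else 0) / Real.sqrt ν := by
        have he : ∀ x : {k : Fin m // k ∈ S}, γ x * ((if b = ↑x then 1 else 0) / Real.sqrt ν)
            = (γ x * if b = ↑x then 1 else 0) / Real.sqrt ν := fun x => by ring
        rw [Finset.sum_congr rfl fun x _ => he x, ← Finset.sum_div]
        congr 1
        by_cases hb : b ∈ S
        · rw [dif_pos hb, Finset.sum_eq_single (⟨b, hb⟩ : {k : Fin m // k ∈ S})]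
          · simp
          · intro jk _ hne
            have hne' : ¬ b = jk.1 := fun h => hne (Subtype.ext h.symm)
            simp [hne']
          · simp
        · rw [dif_neg hb]
          apply Finset.sum_eq_zero
          intro jk _
          have hne' : ¬ b = jk.1 := fun h => hb (h ▸ jk.2)
          simp [hne']
      rw [h1, h2]
      ring
  have hmemK : ∀ (ν : ℝ) (β : Fin p → ℝ) (γ : {k : Fin m // k ∈ S} → ℝ),
      w ν β γ ∈ K ν := by
    intro ν β γ
    rw [← hsum]
    exact Submodule.sum_smul_mem _ _ fun j _ => Submodule.subset_span (Set.mem_range_self j)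
  have hKmem : ∀ (ν : ℝ) (v : E), v ∈ K ν → ∃ β γ, v = w ν β γ := by
    intro ν v hv
    rw [show K ν = Submodule.span ℝ (Set.range (col₁ ν)) from rfl,
      Submodule.mem_span_range_iff_exists_fun] at hv
    obtain ⟨c, hc⟩ := hv
    refine ⟨c ∘ Sum.inl, c ∘ Sum.inr, ?_⟩
    rw [← hsum]
    rw [← hc]
    apply Finset.sum_congr rfl
    intro j _
    rcases j with jp | jk <;> rfl
  have hinner : ∀ (ν : ℝ), 0 < ν → ∀ (β : Fin p → ℝ) (γ : {k : Fin m // k ∈ S} → ℝ)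
      (k : {k : Fin m // k ∉ S}),
      (inner ℝ (col₂ ν k) (w ν β γ) : ℝ) = -(D.mulVec β k.1) / ν := by
    intro ν hν β γ k
    rw [show (inner ℝ (col₂ ν k) (w ν β γ) : ℝ)
        = ∑ i : Fin n ⊕ Fin m, (col₂ ν k) i * (w ν β γ) i from
          (PiLp.inner_apply _ _).trans (Finset.sum_congr rfl fun i _ => Real.inner_apply _ _)]
    have hss : Real.sqrt ν * Real.sqrt ν = ν := Real.mul_self_sqrt hν.le
    have h0 : Real.sqrt ν ≠ 0 := (Real.sqrt_pos.mpr hν).ne'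
    simp only [col₂, w, toE, WithLp.equiv_symm_apply, PiLp.toLp_apply, Fintype.sum_sum_type, Sum.elim_inl,
      Sum.elim_inr, zero_mul, Finset.sum_const_zero, zero_add]
    rw [Finset.sum_eq_single k.1]
    · rw [if_pos rfl, dif_neg k.2]
      rw [div_mul_div_comm, hss, one_mul, zero_sub, neg_div]
    · intro b _ hbn
      rw [if_neg hbn, zero_div, zero_mul]
    · intro hk; exact absurd (Finset.mem_univ _) hk
  -- squared norm of a generic element of K ν
  have hnormw : ∀ (ν : ℝ), 0 < ν → ∀ (β : Fin p → ℝ) (γ : {k : Fin m // k ∈ S} → ℝ),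
      ‖w ν β γ‖ ^ 2 = (∑ a : Fin n, (X.mulVec β a) ^ 2)
        + (∑ b : Fin m, ((if h : b ∈ S then γ ⟨b, h⟩ else 0) - D.mulVec β b) ^ 2) / ν := by
    intro ν hν β γ
    have hss : Real.sqrt ν * Real.sqrt ν = ν := Real.mul_self_sqrt hν.le
    rw [← real_inner_self_eq_norm_sq]
    rw [show (inner ℝ (w ν β γ) (w ν β γ) : ℝ)
        = ∑ i : Fin n ⊕ Fin m, (w ν β γ) i * (w ν β γ) i from
          (PiLp.inner_apply _ _).trans (Finset.sum_congr rfl fun i _ => Real.inner_apply _ _)]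
    simp only [w, toE, WithLp.equiv_symm_apply, PiLp.toLp_apply, Fintype.sum_sum_type, Sum.elim_inl,
      Sum.elim_inr]
    congr 1
    · exact Finset.sum_congr rfl fun a _ => (sq (X.mulVec β a)).symm
    · rw [Finset.sum_div]
      refine Finset.sum_congr rfl fun b _ => ?_
      rw [div_mul_div_comm, hss, sq]
  -- squared norm of col₂
  have hnormcol : ∀ (ν : ℝ), 0 < ν → ∀ (k : {k : Fin m // k ∉ S}),
      ‖col₂ ν k‖ ^ 2 = 1 / ν := by
    intro ν hν k
    have hss : Real.sqrt ν * Real.sqrt ν = ν := Real.mul_self_sqrt hν.le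
    rw [← real_inner_self_eq_norm_sq]
    rw [show (inner ℝ (col₂ ν k) (col₂ ν k) : ℝ)
        = ∑ i : Fin n ⊕ Fin m, (col₂ ν k) i * (col₂ ν k) i from
          (PiLp.inner_apply _ _).trans (Finset.sum_congr rfl fun i _ => Real.inner_apply _ _)]
    simp only [col₂, toE, WithLp.equiv_symm_apply, PiLp.toLp_apply, Fintype.sum_sum_type, Sum.elim_inl,
      Sum.elim_inr, zero_mul, Finset.sum_const_zero, zero_add]
    rw [Finset.sum_eq_single k.1]
    · rw [if_pos rfl, div_mul_div_comm, hss, one_mul]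
    · intro b _ hbn
      rw [if_neg hbn, zero_div, zero_mul]
    · intro hk; exact absurd (Finset.mem_univ _) hk
  -- ⟪col₂, v⟫ = ⟪proj col₂, v⟫ for v ∈ K ν
  have hinner_proj : ∀ (ν : ℝ) (k : {k : Fin m // k ∉ S}) (v : E), v ∈ K ν →
      (inner ℝ (col₂ ν k) v : ℝ)
        = inner ℝ (((Submodule.orthogonalProjectionOnto (K ν) (col₂ ν k)) : K ν) : E) v := by
    intro ν k v hv
    have h := Submodule.starProjection_inner_eq_zero (K := K ν) (col₂ ν k) v hv
    rw [inner_sub_left, Submodule.starProjection_apply] at h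
    linarith only [h]
  -- ‖proj col₂‖² = ⟪col₂, proj col₂⟫
  have hproj_self : ∀ (ν : ℝ) (k : {k : Fin m // k ∉ S}),
      ‖(((Submodule.orthogonalProjectionOnto (K ν) (col₂ ν k)) : K ν) : E)‖ ^ 2
        = inner ℝ (col₂ ν k) (((Submodule.orthogonalProjectionOnto (K ν) (col₂ ν k)) : K ν) : E) := by
    intro ν k
    rw [hinner_proj ν k _ (Submodule.coe_mem _), real_inner_self_eq_norm_sq]
  -- sums over the complement as sums over the subtype
  have hcompl : ∀ f : Fin m → ℝ, (∑ b : Fin m, if b ∈ S then 0 else f b)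
      = ∑ b : {k : Fin m // k ∉ S}, f b.1 := by
    intro f
    rw [← Finset.sum_subtype Sᶜ (fun x => Finset.mem_compl) f]
    rw [Finset.sum_ite, Finset.sum_const_zero, zero_add]
    congr 1
    ext b
    simp [Finset.mem_compl]
  constructor
  · -- r → 0 implies the kernel inclusion
    intro hr x hx k hk
    by_contra hDk
    set kk : {k : Fin m // k ∉ S} := ⟨k, hk⟩ with hkk
    set Sq := ∑ b : {k : Fin m // k ∉ S}, (D.mulVec x b.1) ^ 2 with hSqdef
    have hle : (D.mulVec x k) ^ 2 ≤ Sq :=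
      Finset.single_le_sum (f := fun b : {k : Fin m // k ∉ S} => (D.mulVec x b.1) ^ 2)
        (fun b _ => sq_nonneg _) (Finset.mem_univ kk)
    have hu : 0 < (D.mulVec x k) ^ 2 := by positivity
    have hSqpos : 0 < Sq := lt_of_lt_of_le hu hle
    set γx : {k : Fin m // k ∈ S} → ℝ := fun b => D.mulVec x b.1 with hγx
    set Nc := (Fintype.card {k : Fin m // k ∉ S} : ℝ) with hNc
    have hNpos : 0 < Nc := by
      rw [hNc]
      exact_mod_cast Fintype.card_pos_iff.mpr ⟨kk⟩
    have hwnorm : ∀ ν : ℝ, 0 < ν → ‖w ν x γx‖ ^ 2 = Sq / ν := by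
      intro ν hν
      rw [hnormw ν hν x γx]
      have h1 : ∑ a : Fin n, (X.mulVec x a) ^ 2 = 0 := by simp [hx]
      have h2 : ∑ b : Fin m, ((if h : b ∈ S then γx ⟨b, h⟩ else 0) - D.mulVec x b) ^ 2
          = Sq := by
        rw [hSqdef, ← hcompl fun b => D.mulVec x b ^ 2]
        refine Finset.sum_congr rfl fun b _ => ?_
        by_cases hb : b ∈ S
        · simp [hb, hγx]
        · simp [hb]
      rw [h1, h2, zero_add]
    -- lower bound on r ν for ν > 0
    have hlow : ∀ ν : ℝ, 0 < ν →
        Real.sqrt ((D.mulVec x k) ^ 2 / (Sq * Nc)) ≤ r ν := by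
      intro ν hν
      have hss : Real.sqrt ν * Real.sqrt ν = ν := Real.mul_self_sqrt hν.le
      set P : E := (((Submodule.orthogonalProjectionOnto (K ν) (col₂ ν kk)) : K ν) : E) with hP
      -- ⟪col₂, w ν x γx⟫ = -(Dx k)/ν and ≤ ‖P‖ ‖w‖
      have hinn : (inner ℝ (col₂ ν kk) (w ν x γx) : ℝ) = -(D.mulVec x k) / ν :=
        hinner ν hν x γx kk
      have hPinn : (inner ℝ (col₂ ν kk) (w ν x γx) : ℝ) = inner ℝ P (w ν x γx) :=
        hinner_proj ν kk _ (hmemK ν x γx)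
      have habs : |(D.mulVec x k)| / ν ≤ ‖P‖ * ‖w ν x γx‖ := by
        have := abs_real_inner_le_norm P (w ν x γx)
        rw [← hPinn, hinn] at this
        rw [abs_div, abs_neg, abs_of_pos hν] at this
        exact this
      -- so ‖P‖² ≥ (Dx k)²/(ν Sq)
      have hPnorm : (D.mulVec x k) ^ 2 / (ν * Sq) ≤ ‖P‖ ^ 2 := by
        have hwle : ‖w ν x γx‖ ^ 2 = Sq / ν := hwnorm ν hν
        have h1 : (|D.mulVec x k| / ν) ^ 2 ≤ (‖P‖ * ‖w ν x γx‖) ^ 2 :=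
          pow_le_pow_left₀ (by positivity) habs 2
        rw [mul_pow, hwle, div_pow, sq_abs] at h1
        rw [div_le_iff₀ (by positivity)]
        have h4 : D.mulVec x k ^ 2 / ν ^ 2 * ν ^ 2 = D.mulVec x k ^ 2 :=
          div_mul_cancel₀ _ (by positivity)
        have h5 : ‖P‖ ^ 2 * (Sq / ν) * ν ^ 2 = ‖P‖ ^ 2 * (ν * Sq) := by
          field_simp
        have h6 := mul_le_mul_of_nonneg_right h1 (sq_nonneg ν)
        linarith only [h6, h4, h5]
      -- numerator of r ν is at least ‖P‖²
      have hnum : ‖P‖ ^ 2 ≤ ∑ k' : {k : Fin m // k ∉ S},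
          ‖(((Submodule.orthogonalProjectionOnto (K ν) (col₂ ν k')) : K ν) : E)‖ ^ 2 :=
        Finset.single_le_sum
          (f := fun k' : {k : Fin m // k ∉ S} =>
            ‖(((Submodule.orthogonalProjectionOnto (K ν) (col₂ ν k')) : K ν) : E)‖ ^ 2)
          (fun b _ => sq_nonneg _) (Finset.mem_univ kk)
      have hden : ∑ k' : {k : Fin m // k ∉ S}, ‖col₂ ν k'‖ ^ 2 = Nc / ν := by
        rw [Finset.sum_congr rfl fun k' _ => hnormcol ν hν k']
        rw [Finset.sum_const, Finset.card_univ, hNc, nsmul_eq_mul]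
        ring
      show Real.sqrt ((D.mulVec x k) ^ 2 / (Sq * Nc)) ≤ r ν
      simp only [r]
      rw [hden]
      rw [← Real.sqrt_div (Finset.sum_nonneg fun i _ => sq_nonneg _)]
      apply Real.sqrt_le_sqrt
      rw [div_div_eq_mul_div]
      calc (D.mulVec x k) ^ 2 / (Sq * Nc)
          = (D.mulVec x k) ^ 2 / (ν * Sq) * ν / Nc := by
            field_simp
        _ ≤ ‖P‖ ^ 2 * ν / Nc := by gcongr
        _ ≤ _ := by gcongr
    -- contradiction with r → 0
    have hδpos : 0 < Real.sqrt ((D.mulVec x k) ^ 2 / (Sq * Nc)) :=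
      Real.sqrt_pos.mpr (div_pos hu (mul_pos hSqpos hNpos))
    obtain ⟨N₀, hN₀⟩ := (Metric.tendsto_atTop.mp hr) _ hδpos
    have h1 := hN₀ (max N₀ 1) (le_max_left _ _)
    have h2 := hlow (max N₀ 1) (lt_of_lt_of_le one_pos (le_max_right _ _))
    rw [Real.dist_eq, sub_zero] at h1
    have h3 : r (max N₀ 1) ≤ |r (max N₀ 1)| := le_abs_self _
    linarith only [h1, h2, h3]
  · -- kernel inclusion implies r → 0
    intro hker
    set Nc := (Fintype.card {k : Fin m // k ∉ S} : ℝ) with hNc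
    have hCk : ∀ k : {k : Fin m // k ∉ S}, ∃ C : ℝ, 0 ≤ C ∧ ∀ β : Fin p → ℝ,
        (D.mulVec β k.1) ^ 2 ≤ C * ∑ a : Fin n, (X.mulVec β a) ^ 2 := by
      intro k
      have hker' : (⨅ a : Fin n, LinearMap.ker
            ((LinearMap.proj a).comp (Matrix.mulVecLin X)))
          ≤ LinearMap.ker ((LinearMap.proj k.1).comp (Matrix.mulVecLin D)) := by
        intro β hβ
        rw [Submodule.mem_iInf] at hβ
        have hXβ : X.mulVec β = 0 := by
          funext a
          exact hβ a
        rw [LinearMap.mem_ker]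
        show D.mulVec β k.1 = 0
        exact hker β hXβ k.1 k.2
      obtain ⟨c, hc⟩ := (Submodule.mem_span_range_iff_exists_fun ℝ).1
        (mem_span_of_iInf_ker_le_ker hker')
      refine ⟨∑ a : Fin n, (c a) ^ 2, Finset.sum_nonneg fun a _ => sq_nonneg _, fun β => ?_⟩
      have hφ : D.mulVec β k.1 = ∑ a : Fin n, c a * X.mulVec β a := by
        have h' := LinearMap.congr_fun hc β
        simpa [LinearMap.sum_apply, LinearMap.smul_apply, smul_eq_mul] using h'.symm
      rw [hφ]
      exact Finset.sum_mul_sq_le_sq_mul_sq Finset.univ c (fun a => X.mulVec β a)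
    choose C hC0 hCle using hCk
    -- the key per-column bound
    have hbnd : ∀ ν : ℝ, 0 < ν → ∀ k : {k : Fin m // k ∉ S},
        ν * ‖(((Submodule.orthogonalProjectionOnto (K ν) (col₂ ν k)) : K ν) : E)‖ ^ 2
          ≤ Real.sqrt (C k / (4 * ν)) := by
      intro ν hν k
      obtain ⟨β, γ, hP⟩ := hKmem ν _
        (Submodule.coe_mem (Submodule.orthogonalProjectionOnto (K ν) (col₂ ν k)))
      set t := ‖(((Submodule.orthogonalProjectionOnto (K ν) (col₂ ν k)) : K ν) : E)‖ ^ 2 with ht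
      set A := ∑ a : Fin n, (X.mulVec β a) ^ 2 with hA
      set B := ∑ b : Fin m, ((if h : b ∈ S then γ ⟨b, h⟩ else 0) - D.mulVec β b) ^ 2 with hB
      have hAnn : 0 ≤ A := Finset.sum_nonneg fun a _ => sq_nonneg _
      have hBnn : 0 ≤ B := Finset.sum_nonneg fun a _ => sq_nonneg _
      have htval : t = -(D.mulVec β k.1) / ν := by
        rw [ht, hproj_self ν k, hP, hinner ν hν β γ k]
      have ht2 : t = A + B / ν := by
        rw [ht, hP, hnormw ν hν β γ, hA, hB]
      set u := (D.mulVec β k.1) ^ 2 with hu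
      have hunn : 0 ≤ u := sq_nonneg _
      have hu1 : u ≤ C k * A := hCle k β
      have hu2 : u ≤ B := by
        calc u = ((if h : k.1 ∈ S then γ ⟨k.1, h⟩ else 0) - D.mulVec β k.1) ^ 2 := by
              rw [hu, dif_neg k.2, zero_sub, neg_sq]
          _ ≤ B :=
            Finset.single_le_sum
              (f := fun b => ((if h : b ∈ S then γ ⟨b, h⟩ else 0) - D.mulVec β b) ^ 2)
              (fun b _ => sq_nonneg _) (Finset.mem_univ k.1)
      have ht3 : t ^ 2 = u / ν ^ 2 := by
        rw [htval, div_pow, neg_sq, hu]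
      have htnn : 0 ≤ t := by rw [ht]; positivity
      have h1 : ν * t = ν * A + B := by
        rw [ht2]
        field_simp
      have h2 : ν ^ 2 * t ^ 2 = u := by
        rw [ht3]
        field_simp
      have h1sq : (ν * A + B) ^ 2 = u := by
        rw [← h1, mul_pow, h2]
      have hab : 4 * ν * (A * B) ≤ u := by
        nlinarith only [sq_nonneg (ν * A - B), h1sq]
      have hCAnn : 0 ≤ C k * A := mul_nonneg (hC0 k) hAnn
      have hsq : u ^ 2 ≤ C k * A * B := by
        calc u ^ 2 = u * u := sq u
          _ ≤ (C k * A) * B := mul_le_mul hu1 hu2 hunn hCAnn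
      have hule : u ≤ C k / (4 * ν) := by
        rcases eq_or_lt_of_le hunn with h | h
        · rw [← h]
          exact div_nonneg (hC0 k) (by positivity)
        · rw [le_div_iff₀ (by positivity)]
          nlinarith only [hsq, mul_le_mul_of_nonneg_left hab (hC0 k), h, hν]
      have hfin : (ν * t) ^ 2 ≤ C k / (4 * ν) := by
        rw [mul_pow, ht3, mul_comm, div_mul_cancel₀ _ (pow_ne_zero 2 hν.ne')]
        exact hule
      calc ν * t = Real.sqrt ((ν * t) ^ 2) :=
            (Real.sqrt_sq (mul_nonneg hν.le htnn)).symm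
        _ ≤ _ := Real.sqrt_le_sqrt hfin
    set Bc := ∑ k : {k : Fin m // k ∉ S}, Real.sqrt (C k) with hBc
    have hg0 : Tendsto (fun ν : ℝ => Bc / 2 * Real.sqrt ν⁻¹) atTop (nhds 0) := by
      have h1 : Tendsto (fun ν : ℝ => Real.sqrt ν⁻¹) atTop (nhds 0) := by
        have h2 : Tendsto (fun ν : ℝ => ν⁻¹) atTop (nhds 0) := tendsto_inv_atTop_zero
        have h3 := (Real.continuous_sqrt.tendsto 0).comp h2
        simpa [Function.comp_def] using h3
      have h4 := h1.const_mul (Bc / 2)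
      simpa using h4
    have hsqrt4 : Real.sqrt 4 = 2 := by
      rw [show (4:ℝ) = 2 ^ 2 by norm_num, Real.sqrt_sq (by norm_num : (0:ℝ) ≤ 2)]
    have hF : Tendsto (fun ν : ℝ => ∑ k : {k : Fin m // k ∉ S},
        ν * ‖(((Submodule.orthogonalProjectionOnto (K ν) (col₂ ν k)) : K ν) : E)‖ ^ 2)
        atTop (nhds 0) := by
      apply squeeze_zero'
      · filter_upwards [eventually_ge_atTop (1:ℝ)] with ν hν1
        exact Finset.sum_nonneg fun k _ =>
          mul_nonneg (by linarith only [hν1]) (sq_nonneg _)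
      · filter_upwards [eventually_ge_atTop (1:ℝ)] with ν hν1
        have hν : (0:ℝ) < ν := lt_of_lt_of_le one_pos hν1
        calc (∑ k : {k : Fin m // k ∉ S},
              ν * ‖(((Submodule.orthogonalProjectionOnto (K ν) (col₂ ν k)) : K ν) : E)‖ ^ 2)
            ≤ ∑ k : {k : Fin m // k ∉ S}, Real.sqrt (C k / (4 * ν)) :=
              Finset.sum_le_sum fun k _ => hbnd ν hν k
          _ = ∑ k : {k : Fin m // k ∉ S}, Real.sqrt (C k) * (2 * Real.sqrt ν)⁻¹ := by
              refine Finset.sum_congr rfl fun k _ => ?_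
              rw [Real.sqrt_div (hC0 k), Real.sqrt_mul (by norm_num : (0:ℝ) ≤ 4), hsqrt4,
                div_eq_mul_inv]
          _ = Bc / 2 * Real.sqrt ν⁻¹ := by
              rw [← Finset.sum_mul, ← hBc, Real.sqrt_inv, mul_inv]
              ring
      · exact hg0
    have hreq : ∀ᶠ ν in atTop, r ν
        = Real.sqrt (∑ k : {k : Fin m // k ∉ S},
            ν * ‖(((Submodule.orthogonalProjectionOnto (K ν) (col₂ ν k)) : K ν) : E)‖ ^ 2)
          / Real.sqrt Nc := by
      filter_upwards [eventually_ge_atTop (1:ℝ)] with ν hν1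
      have hν : (0:ℝ) < ν := lt_of_lt_of_le one_pos hν1
      have hden : ∑ k' : {k : Fin m // k ∉ S}, ‖col₂ ν k'‖ ^ 2 = Nc / ν := by
        rw [Finset.sum_congr rfl fun k' _ => hnormcol ν hν k']
        rw [Finset.sum_const, Finset.card_univ, hNc, nsmul_eq_mul]
        ring
      have hNnn : (0:ℝ) ≤ Nc := by
        rw [hNc]
        positivity
      simp only [r]
      rw [hden, ← Finset.mul_sum, Real.sqrt_mul hν.le, Real.sqrt_div hNnn,
        div_div_eq_mul_div]
      ring
    rw [tendsto_congr' hreq]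
    have h1 : Tendsto (fun ν : ℝ => Real.sqrt (∑ k : {k : Fin m // k ∉ S},
        ν * ‖(((Submodule.orthogonalProjectionOnto (K ν) (col₂ ν k)) : K ν) : E)‖ ^ 2))
        atTop (nhds 0) := by
      have h3 := (Real.continuous_sqrt.tendsto 0).comp hF
      simpa [Function.comp_def] using h3
    simpa using h1.div_const (Real.sqrt Nc)
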